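/- arXiv:0705.3372 — 2 statements merged into one kernel-verified Lean document; each statement's English description precedes it below -/
import Mathlib

section
/- Let k be a number field and p a prime number. For every a ∈ k^× whose class lies in V_∅(k), the principal fractional ideal (a) is the p-th power of a (necessarily unique) fractional ideal I of k, and sending the class of a to the ideal class of I defines a group homomorphism V_∅(k) → Cl(k) whose image is exactly the p-torsion subgroup Cl(k)[p] and whose kernel is exactly the image of the unit group O_k^× in k^×/(k^×)^p. In other words, there is an exact sequence 0 → O_k^×/(O_k^×)^p → V_∅(k) → Cl(k)[p] → 0. -/
open NumberField IsDedekindDomain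

/-- The subgroup of `p`-th powers in a commutative group `G`. -/
def pPowers (G : Type*) [CommGroup G] (p : ℕ) : Subgroup G :=
  (powMonoidHom p : G →* G).range

/-- The map `k^× → (k_v)^×` into the units of the `v`-adic completion. -/
noncomputable def localUnitsMap (k : Type*) [Field k] [NumberField k]
    (v : HeightOneSpectrum (𝓞 k)) : kˣ →* (v.adicCompletion k)ˣ :=
  Units.map (algebraMap k (v.adicCompletion k)).toMonoidHom

/-- The `v`-adic valuation of a nonzero element of `k`, as an element of
`Multiplicative ℤ` (a uniformizer is sent to `ofAdd (-1)`). -/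
noncomputable def mulValHom (k : Type*) [Field k] [NumberField k]
    (v : HeightOneSpectrum (𝓞 k)) : kˣ →* Multiplicative ℤ :=
  (WithZero.unitsWithZeroEquiv.toMonoidHom).comp
    (Units.map ((v.valuation (K := k)).toMonoidWithZeroHom.toMonoidHom))

/-- The normalized additive `v`-adic valuation `v(a) ∈ ℤ` of `a ∈ k^×`
(a uniformizer has valuation `1`). -/
noncomputable def addVal (k : Type*) [Field k] [NumberField k]
    (v : HeightOneSpectrum (𝓞 k)) (a : kˣ) : ℤ :=
  - Multiplicative.toAdd (mulValHom k v a)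

/-- The additive `v`-adic valuation modulo `p`, as a group homomorphism. -/
noncomputable def valModP (k : Type*) [Field k] [NumberField k] (p : ℕ)
    (v : HeightOneSpectrum (𝓞 k)) : kˣ →* Multiplicative (ZMod p) :=
  (AddMonoidHom.toMultiplicative (Int.castAddHom (ZMod p))).comp (mulValHom k v)

/-- The subgroup of those `a ∈ k^×` which are `p`-th powers in the completion `k_v`. -/
noncomputable def locallyPthPower (k : Type*) [Field k] [NumberField k] (p : ℕ)
    (v : HeightOneSpectrum (𝓞 k)) : Subgroup kˣ :=
  Subgroup.comap (localUnitsMap k v) (pPowers (v.adicCompletion k)ˣ p)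

/-- The subgroup of those `a ∈ k^×` which are `p`-th powers in `k_v` for all `v ∈ S` and
whose `v`-adic valuation is divisible by `p` for every nonzero prime `v ∉ S`. -/
noncomputable def VSpre (k : Type*) [Field k] [NumberField k] (p : ℕ)
    (S : Set (HeightOneSpectrum (𝓞 k))) : Subgroup kˣ :=
  (⨅ v ∈ S, locallyPthPower k p v) ⊓ (⨅ v ∈ Sᶜ, (valModP k p v).ker)

/-- The Kummer group `V_S(k)`, the subgroup of `k^×/(k^×)^p` consisting of the classes of
those `a ∈ k^×` which are `p`-th powers in `k_v` for every `v ∈ S` and whose `v`-adic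
valuation is divisible by `p` for every nonzero prime `v ∉ S`. -/
noncomputable def VS (k : Type*) [Field k] [NumberField k] (p : ℕ)
    (S : Set (HeightOneSpectrum (𝓞 k))) : Subgroup (kˣ ⧸ pPowers kˣ p) :=
  (VSpre k p S).map (QuotientGroup.mk' (pPowers kˣ p))


section Aux

variable (k : Type) [Field k] [NumberField k] (p : ℕ)

/-- shorthand -/
local notation "R⁰" => nonZeroDivisors (𝓞 k)
local notation "Frac" => FractionalIdeal (nonZeroDivisors (𝓞 k)) k

theorem mulValHom_eq (v : HeightOneSpectrum (𝓞 k)) (a : kˣ) :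
    mulValHom k v a = v.valuationOfNeZero a := by
  rw [← WithZero.coe_inj, HeightOneSpectrum.valuationOfNeZero_eq]
  show ((WithZero.unzero _ : Multiplicative ℤ) : WithZero (Multiplicative ℤ)) = _
  rw [WithZero.coe_unzero]
  rfl

theorem span_ne_zero (a : kˣ) : FractionalIdeal.spanSingleton R⁰ (a : k) ≠ 0 := by
  rw [ne_eq, FractionalIdeal.spanSingleton_eq_zero_iff]
  exact a.ne_zero

theorem count_span (v : HeightOneSpectrum (𝓞 k)) (a : kˣ) :
    FractionalIdeal.count k v (FractionalIdeal.spanSingleton R⁰ (a : k)) = addVal k v a := by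
  classical
  have hspec : (a : k) * algebraMap (𝓞 k) k (IsLocalization.sec R⁰ (a:k)).2
      = algebraMap (𝓞 k) k (IsLocalization.sec R⁰ (a:k)).1 :=
    IsLocalization.sec_spec R⁰ (a : k)
  set s := IsLocalization.sec R⁰ (a : k)
  have hs2 : (algebraMap (𝓞 k) k s.2 : k) ≠ 0 := by
    intro h
    exact nonZeroDivisors.coe_ne_zero s.2
      ((map_eq_zero_iff _ (FaithfulSMul.algebraMap_injective (𝓞 k) k)).mp h)
  have haJ : FractionalIdeal.spanSingleton R⁰ (a : k)
      = FractionalIdeal.spanSingleton R⁰ ((algebraMap (𝓞 k) k s.2)⁻¹) * ↑(Ideal.span {s.1}) := by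
    rw [FractionalIdeal.coeIdeal_span_singleton,
      FractionalIdeal.spanSingleton_mul_spanSingleton, ← hspec]
    rw [inv_mul_eq_div, mul_div_assoc, div_self hs2, mul_one]
  rw [FractionalIdeal.count_well_defined k v (span_ne_zero k a) haJ]
  have hval : addVal k v a =
      ((Associates.mk v.asIdeal).count (Associates.mk (Ideal.span {s.1})).factors : ℤ) -
      ((Associates.mk v.asIdeal).count (Associates.mk (Ideal.span {(s.2 : 𝓞 k)})).factors : ℤ) := by
    rw [addVal, mulValHom_eq]
    show -Multiplicative.toAdd (v.valuationOfNeZeroToFun a) = _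
    rw [HeightOneSpectrum.valuationOfNeZeroToFun]
    simp only [toAdd_ofAdd]
    ring
  rw [hval]

theorem mem_VSpre_iff (a : kˣ) : a ∈ VSpre k p ∅ ↔
    ∀ v : HeightOneSpectrum (𝓞 k), (p : ℤ) ∣ FractionalIdeal.count k v
      (FractionalIdeal.spanSingleton R⁰ (a : k)) := by
  rw [VSpre, Subgroup.mem_inf]
  constructor
  · rintro ⟨-, h⟩ v
    have hv := Subgroup.mem_iInf.mp (Subgroup.mem_iInf.mp h v) (by simp)
    rw [MonoidHom.mem_ker, valModP] at hv
    rw [count_span]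
    have h0 : ((Multiplicative.toAdd (mulValHom k v a) : ℤ) : ZMod p) = 0 := by
      have := congrArg Multiplicative.toAdd hv
      simpa using this
    rw [ZMod.intCast_zmod_eq_zero_iff_dvd] at h0
    rw [addVal]
    exact h0.neg_right
  · intro h
    refine ⟨Subgroup.mem_iInf.mpr fun v => Subgroup.mem_iInf.mpr (by simp), ?_⟩
    refine Subgroup.mem_iInf.mpr fun v => Subgroup.mem_iInf.mpr fun _ => ?_
    rw [MonoidHom.mem_ker, valModP]
    have hv := h v
    rw [count_span, addVal, dvd_neg] at hv
    have h0 : ((Multiplicative.toAdd (mulValHom k v a) : ℤ) : ZMod p) = 0 :=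
      (ZMod.intCast_zmod_eq_zero_iff_dvd _ _).mpr hv
    show Multiplicative.ofAdd ((Multiplicative.toAdd (mulValHom k v a) : ℤ) : ZMod p) = 1
    rw [h0]; rfl

theorem root_uniq (hp : p ≠ 0) {I J : Frac} (h : I ^ p = J ^ p) (h0 : J ^ p ≠ 0) : I = J := by
  have hI : I ≠ 0 := fun hI => h0 (by rw [← h, hI, zero_pow hp])
  have hJ : J ≠ 0 := fun hJ => h0 (by rw [hJ, zero_pow hp])
  have hc : ∀ v : HeightOneSpectrum (𝓞 k),
      FractionalIdeal.count k v I = FractionalIdeal.count k v J := by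
    intro v
    have hcount := congrArg (FractionalIdeal.count k v) h
    rw [FractionalIdeal.count_pow, FractionalIdeal.count_pow] at hcount
    exact mul_left_cancel₀ (by exact_mod_cast hp) hcount
  rw [← FractionalIdeal.finprod_heightOneSpectrum_factorization' k hI,
    ← FractionalIdeal.finprod_heightOneSpectrum_factorization' k hJ]
  exact finprod_congr fun v => by rw [hc v]

theorem exists_root (hp : p ≠ 0) (a : kˣ) (ha : a ∈ VSpre k p ∅) :
    ∃ I : Frac, I ^ p = FractionalIdeal.spanSingleton R⁰ (a : k) := by
  classical
  rw [mem_VSpre_iff] at ha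
  set A := FractionalIdeal.spanSingleton R⁰ (a : k) with hA
  set e : HeightOneSpectrum (𝓞 k) → ℤ := fun v => FractionalIdeal.count k v A / p with he
  have hpe : ∀ v, (p : ℤ) * e v = FractionalIdeal.count k v A := by
    intro v
    obtain ⟨c, hc⟩ := ha v
    show (p:ℤ) * (FractionalIdeal.count k v A / p) = _
    rw [hc, Int.mul_ediv_cancel_left c (by exact_mod_cast hp)]
  have hsupp : (Function.mulSupport fun v : HeightOneSpectrum (𝓞 k) =>
      (v.asIdeal : Frac) ^ (e v)).Finite := by
    apply (FractionalIdeal.finite_factors A).subset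
    intro v hv
    simp only [Function.mem_mulSupport] at hv
    intro hc0
    apply hv
    have he0 : e v = 0 := by
      have := hpe v; rw [hc0] at this
      exact (mul_eq_zero.mp this).resolve_left (by exact_mod_cast hp)
    rw [he0, zpow_zero]
  refine ⟨∏ᶠ v, (v.asIdeal : Frac) ^ (e v), ?_⟩
  rw [hA, ← FractionalIdeal.finprod_heightOneSpectrum_factorization' k (span_ne_zero k a),
    finprod_pow hsupp]
  apply finprod_congr
  intro v
  rw [← zpow_natCast ((v.asIdeal : Frac) ^ (e v)) p, ← zpow_mul, mul_comm, hpe v]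

/-- The chosen `p`-th root of the principal fractional ideal of `a ∈ V_∅-pre`, as a unit. -/
noncomputable def rootu (hp : p ≠ 0) (a : VSpre k p ∅) : (Frac)ˣ :=
  Units.mk0 (exists_root k p hp a.1 a.2).choose (by
    intro h0
    have := (exists_root k p hp a.1 a.2).choose_spec
    rw [h0, zero_pow hp] at this
    exact span_ne_zero k a.1 this.symm)

theorem rootu_spec (hp : p ≠ 0) (a : VSpre k p ∅) :
    (rootu k p hp a : Frac) ^ p = FractionalIdeal.spanSingleton R⁰ ((a : kˣ) : k) :=
  (exists_root k p hp a.1 a.2).choose_spec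

theorem rootu_eq (hp : p ≠ 0) (a : VSpre k p ∅) (I : (Frac)ˣ)
    (hI : (I : Frac) ^ p = FractionalIdeal.spanSingleton R⁰ ((a : kˣ) : k)) :
    rootu k p hp a = I := by
  refine Units.ext ?_
  refine root_uniq k p hp ?_ ?_
  · rw [rootu_spec, hI]
  · rw [hI]; exact span_ne_zero k a.1

/-- The homomorphism `VSpre → Cl(k)`. -/
noncomputable def psi (hp : p ≠ 0) : VSpre k p ∅ →* ClassGroup (𝓞 k) where
  toFun a := ClassGroup.mk k (rootu k p hp a)
  map_one' := by
    show ClassGroup.mk k (rootu k p hp 1) = 1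
    rw [rootu_eq k p hp 1 1 (by simp [FractionalIdeal.spanSingleton_one]), map_one]
  map_mul' a b := by
    show ClassGroup.mk k (rootu k p hp (a * b))
        = ClassGroup.mk k (rootu k p hp a) * ClassGroup.mk k (rootu k p hp b)
    rw [← map_mul, rootu_eq k p hp (a * b) (rootu k p hp a * rootu k p hp b) ?_]
    rw [Units.val_mul, mul_pow, rootu_spec, rootu_spec,
      FractionalIdeal.spanSingleton_mul_spanSingleton]
    rfl

theorem mk_eq_one_iff' {I : (Frac)ˣ} :
    ClassGroup.mk k I = 1 ↔ I ∈ (toPrincipalIdeal (𝓞 k) k).range := by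
  rw [ClassGroup.mk_eq_one_iff, mem_principal_ideals_iff]
  constructor
  · rintro ⟨⟨x, hx⟩⟩
    refine ⟨x, FractionalIdeal.coeToSubmodule_injective ?_⟩
    show ((FractionalIdeal.spanSingleton R⁰ x : Frac) : Submodule (𝓞 k) k)
        = ((I : Frac) : Submodule (𝓞 k) k)
    rw [FractionalIdeal.coe_spanSingleton, ← hx]
  · rintro ⟨x, hx⟩
    refine ⟨⟨x, ?_⟩⟩
    show ((I : Frac) : Submodule (𝓞 k) k) = Submodule.span (𝓞 k) {(x : k)}
    rw [← FractionalIdeal.coe_spanSingleton R⁰ (x : k), hx]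

theorem mk_toPrincipal (t : kˣ) : ClassGroup.mk k (toPrincipalIdeal (𝓞 k) k t) = 1 :=
  (mk_eq_one_iff' k).mpr ⟨t, rfl⟩

theorem pPowers_le : pPowers kˣ p ≤ VSpre k p ∅ := by
  rintro x ⟨t, rfl⟩
  rw [mem_VSpre_iff]
  intro v
  show (p:ℤ) ∣ FractionalIdeal.count k v (FractionalIdeal.spanSingleton R⁰ ((t ^ p : kˣ) : k))
  rw [show ((t ^ p : kˣ) : k) = (t : k) ^ p from rfl, ← FractionalIdeal.spanSingleton_pow,
    FractionalIdeal.count_pow]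
  exact ⟨_, rfl⟩


/-- The restriction of the quotient map to `VSpre`. -/
noncomputable def gmap : VSpre k p ∅ →* kˣ ⧸ pPowers kˣ p :=
  (QuotientGroup.mk' (pPowers kˣ p)).domRestrict (VSpre k p ∅)

theorem gmap_range : (gmap k p).range = VS k p ∅ := by
  rw [gmap, MonoidHom.domRestrict_range]; rfl

theorem psi_ker (hp : p ≠ 0) : ∀ a ∈ (gmap k p).ker, psi k p hp a = 1 := by
  intro a ha
  rw [MonoidHom.mem_ker] at ha
  have hmem : (a : kˣ) ∈ pPowers kˣ p := (QuotientGroup.eq_one_iff _).mp ha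
  obtain ⟨t, ht⟩ := hmem
  show ClassGroup.mk k (rootu k p hp a) = 1
  rw [rootu_eq k p hp a (toPrincipalIdeal (𝓞 k) k t) ?_, mk_toPrincipal]
  rw [coe_toPrincipalIdeal, FractionalIdeal.spanSingleton_pow, ← ht]
  rfl

/-- The homomorphism `V_∅(k) → Cl(k)`. -/
noncomputable def phi (hp : p ≠ 0) : VS k p ∅ →* ClassGroup (𝓞 k) :=
  (QuotientGroup.lift (gmap k p).ker (psi k p hp) (psi_ker k p hp)).comp
    (((QuotientGroup.quotientKerEquivRange (gmap k p)).trans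
      (MulEquiv.subgroupCongr (gmap_range k p))).symm.toMonoidHom)

theorem phi_apply (hp : p ≠ 0) (b : kˣ) (hb : b ∈ VSpre k p ∅) (x : VS k p ∅)
    (hx : (x : kˣ ⧸ pPowers kˣ p) = QuotientGroup.mk b) :
    phi k p hp x = psi k p hp ⟨b, hb⟩ := by
  set E := (QuotientGroup.quotientKerEquivRange (gmap k p)).trans
      (MulEquiv.subgroupCongr (gmap_range k p)) with hE
  have hEb : E (QuotientGroup.mk (⟨b, hb⟩ : VSpre k p ∅)) = x := by
    refine Subtype.ext ?_
    rw [hx]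
    rfl
  have h2 : E.symm x = QuotientGroup.mk (⟨b, hb⟩ : VSpre k p ∅) := by
    rw [← hEb, MulEquiv.symm_apply_apply]
  show (QuotientGroup.lift (gmap k p).ker (psi k p hp) (psi_ker k p hp)) (E.symm x) = _
  rw [h2]
  rfl

theorem phi_spec (hp : p ≠ 0) (a : kˣ)
    (h : (QuotientGroup.mk a : kˣ ⧸ pPowers kˣ p) ∈ VS k p ∅)
    (I : (Frac)ˣ) (hI : (I : Frac) ^ p = FractionalIdeal.spanSingleton R⁰ (a : k)) :
    phi k p hp ⟨QuotientGroup.mk a, h⟩ = ClassGroup.mk k I := by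
  obtain ⟨b, hbN, hb⟩ := h
  have hb' : (QuotientGroup.mk b : kˣ ⧸ pPowers kˣ p) = QuotientGroup.mk a := hb
  have hx : ((⟨QuotientGroup.mk a, ⟨b, hbN, hb⟩⟩ : VS k p ∅) : kˣ ⧸ pPowers kˣ p)
      = QuotientGroup.mk b := hb'.symm
  rw [phi_apply k p hp b hbN _ hx]
  obtain ⟨t, ht⟩ := QuotientGroup.eq.mp hb'
  have ht' : (t : kˣ) ^ p = b⁻¹ * a := ht
  have hbu : a * (t ^ p)⁻¹ = b := by rw [ht']; group
  show ClassGroup.mk k (rootu k p hp ⟨b, hbN⟩) = _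
  rw [rootu_eq k p hp ⟨b, hbN⟩ (I * (toPrincipalIdeal (𝓞 k) k t)⁻¹) ?_]
  · rw [map_mul, map_inv, mk_toPrincipal, inv_one, mul_one]
  · have hcast : (a : k) * ((t : k) ^ p)⁻¹ = ((b : kˣ) : k) := by
      rw [← hbu]; push_cast; ring
    rw [Units.val_mul, Units.val_inv_eq_inv_val, mul_pow, hI, coe_toPrincipalIdeal,
      FractionalIdeal.spanSingleton_inv, FractionalIdeal.spanSingleton_pow,
      FractionalIdeal.spanSingleton_mul_spanSingleton, inv_pow, hcast]

end Aux

/-- the exact sequence `0 → O_k^×/(O_k^×)^p → V_∅(k) → Cl(k)[p] → 0`. -/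
theorem statement0 (k : Type) [Field k] [NumberField k] (p : ℕ) (hp : p.Prime) :
    (∀ a : kˣ, (QuotientGroup.mk a : kˣ ⧸ pPowers kˣ p) ∈ VS k p ∅ →
      ∃! I : FractionalIdeal (nonZeroDivisors (𝓞 k)) k,
        I ^ p = FractionalIdeal.spanSingleton (nonZeroDivisors (𝓞 k)) (a : k)) ∧
    ∃ φ : VS k p ∅ →* ClassGroup (𝓞 k),
      (∀ (a : kˣ) (h : (QuotientGroup.mk a : kˣ ⧸ pPowers kˣ p) ∈ VS k p ∅)
          (I : (FractionalIdeal (nonZeroDivisors (𝓞 k)) k)ˣ),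
        (I : FractionalIdeal (nonZeroDivisors (𝓞 k)) k) ^ p
            = FractionalIdeal.spanSingleton (nonZeroDivisors (𝓞 k)) (a : k) →
        φ ⟨QuotientGroup.mk a, h⟩ = ClassGroup.mk k I) ∧
      Set.range φ = {c : ClassGroup (𝓞 k) | c ^ p = 1} ∧
      ∀ x : VS k p ∅, φ x = 1 ↔
        ∃ u : (𝓞 k)ˣ,
          (QuotientGroup.mk (Units.map (algebraMap (𝓞 k) k).toMonoidHom u)
            : kˣ ⧸ pPowers kˣ p) = (x : kˣ ⧸ pPowers kˣ p) := by
  classical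
  have hp0 : p ≠ 0 := hp.ne_zero
  constructor
  · intro a ha
    obtain ⟨b, hbN, hb⟩ := ha
    have hb' : (QuotientGroup.mk b : kˣ ⧸ pPowers kˣ p) = QuotientGroup.mk a := hb
    have hmem : b⁻¹ * a ∈ pPowers kˣ p := QuotientGroup.eq.mp hb'
    have haN : a ∈ VSpre k p ∅ := by
      have := (VSpre k p ∅).mul_mem hbN (pPowers_le k p hmem)
      simpa using this
    obtain ⟨I, hI⟩ := exists_root k p hp0 a haN
    exact ⟨I, hI, fun J hJ => root_uniq k p hp0 (hJ.trans hI.symm)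
      (by rw [hI]; exact span_ne_zero k a)⟩
  · refine ⟨phi k p hp0, fun a h I hI => phi_spec k p hp0 a h I hI, ?_, ?_⟩
    · ext c
      simp only [Set.mem_range, Set.mem_setOf_eq]
      constructor
      · rintro ⟨x, rfl⟩
        obtain ⟨b, hbN, hb⟩ := x.2
        have hxb : (x : kˣ ⧸ pPowers kˣ p) = QuotientGroup.mk b := hb.symm
        rw [phi_apply k p hp0 b hbN x hxb]
        show (ClassGroup.mk k (rootu k p hp0 ⟨b, hbN⟩)) ^ p = 1
        rw [← map_pow]
        have hru : rootu k p hp0 ⟨b, hbN⟩ ^ p = toPrincipalIdeal (𝓞 k) k b := by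
          refine Units.ext ?_
          rw [Units.val_pow_eq_pow_val, rootu_spec, coe_toPrincipalIdeal]
        rw [hru, mk_toPrincipal]
      · refine ClassGroup.induction (R := 𝓞 k) k
          (P := fun c => c ^ p = 1 → ∃ x, phi k p hp0 x = c) ?_ c
        intro J hJ
        rw [← map_pow] at hJ
        obtain ⟨b, hb⟩ := (mk_eq_one_iff' k).mp hJ
        have hbspan : (J : FractionalIdeal (nonZeroDivisors (𝓞 k)) k) ^ p
            = FractionalIdeal.spanSingleton (nonZeroDivisors (𝓞 k)) (b : k) := by
          rw [← Units.val_pow_eq_pow_val, ← hb, coe_toPrincipalIdeal]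
        have hbN : b ∈ VSpre k p ∅ := by
          rw [mem_VSpre_iff]
          intro v
          rw [← hbspan, FractionalIdeal.count_pow]
          exact ⟨_, rfl⟩
        have hmemVS : (QuotientGroup.mk b : kˣ ⧸ pPowers kˣ p) ∈ VS k p ∅ := ⟨b, hbN, rfl⟩
        exact ⟨⟨QuotientGroup.mk b, hmemVS⟩, phi_spec k p hp0 b hmemVS J hbspan⟩
    · intro x
      obtain ⟨b, hbN, hb⟩ := x.2
      have hxb : (x : kˣ ⧸ pPowers kˣ p) = QuotientGroup.mk b := hb.symm
      rw [phi_apply k p hp0 b hbN x hxb]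
      constructor
      · intro hx1
        obtain ⟨c, hc⟩ := (mk_eq_one_iff' k).mp hx1
        have hspan : FractionalIdeal.spanSingleton (nonZeroDivisors (𝓞 k)) ((c : k) ^ p)
            = FractionalIdeal.spanSingleton (nonZeroDivisors (𝓞 k)) (b : k) := by
          rw [← FractionalIdeal.spanSingleton_pow]
          calc (FractionalIdeal.spanSingleton (nonZeroDivisors (𝓞 k)) ((c : kˣ) : k)) ^ p
              = ((toPrincipalIdeal (𝓞 k) k c :
                  (FractionalIdeal (nonZeroDivisors (𝓞 k)) k)ˣ) :
                  FractionalIdeal (nonZeroDivisors (𝓞 k)) k) ^ p := by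
                rw [coe_toPrincipalIdeal]
            _ = ((rootu k p hp0 ⟨b, hbN⟩ : (FractionalIdeal (nonZeroDivisors (𝓞 k)) k)ˣ) :
                  FractionalIdeal (nonZeroDivisors (𝓞 k)) k) ^ p := by rw [hc]
            _ = _ := rootu_spec k p hp0 ⟨b, hbN⟩
        obtain ⟨z, hz⟩ := (FractionalIdeal.spanSingleton_eq_spanSingleton
          (R := 𝓞 k)).mp hspan
        refine ⟨z, ?_⟩
        rw [hxb, QuotientGroup.eq]
        refine ⟨c, ?_⟩
        refine Units.ext ?_
        show ((c : kˣ) : k) ^ p = (((Units.map (algebraMap (𝓞 k) k).toMonoidHom z)⁻¹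
          * b : kˣ) : k)
        have hz' : algebraMap (𝓞 k) k z * ((c : kˣ) : k) ^ p = (b : k) := by
          rw [← hz, Units.smul_def, Algebra.smul_def]
        rw [Units.val_mul, ← hz']
        have hne : (algebraMap (𝓞 k) k z : k) ≠ 0 := by
          intro h0
          exact (Units.ne_zero (Units.map (algebraMap (𝓞 k) k).toMonoidHom z)) h0
        field_simp
        rw [Units.val_inv_eq_inv_val]
        exact (inv_mul_cancel₀ hne).symm
      · rintro ⟨u, hu⟩
        have h1 : (QuotientGroup.mk (Units.map (algebraMap (𝓞 k) k).toMonoidHom u)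
            : kˣ ⧸ pPowers kˣ p) = QuotientGroup.mk b := by rw [hu, hxb]
        obtain ⟨t, ht⟩ := QuotientGroup.eq.mp h1
        have ht' : (t : kˣ) ^ p = (Units.map (algebraMap (𝓞 k) k).toMonoidHom u)⁻¹ * b := ht
        have hbu : (b : kˣ) = Units.map (algebraMap (𝓞 k) k).toMonoidHom u * t ^ p := by
          rw [ht']; group
        show ClassGroup.mk k (rootu k p hp0 ⟨b, hbN⟩) = 1
        rw [rootu_eq k p hp0 ⟨b, hbN⟩ (toPrincipalIdeal (𝓞 k) k t) ?_, mk_toPrincipal]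
        rw [coe_toPrincipalIdeal, FractionalIdeal.spanSingleton_pow,
          FractionalIdeal.spanSingleton_eq_spanSingleton]
        refine ⟨u, ?_⟩
        have hval : ((Units.map (algebraMap (𝓞 k) k).toMonoidHom u * t ^ p : kˣ) : k)
            = (b : k) := by rw [← hbu]
        rw [Units.smul_def, Algebra.smul_def, ← hval]
        push_cast
        rfl
end

section
/- Let k be a number field, p a prime number, and S any finite set of nonzero primes of O_k. Then the Kummer group V_S(k) is a finite group. -/
open NumberField IsDedekindDomain

section Aux

open FractionalIdeal
open scoped nonZeroDivisors

variable {k : Type} [Field k] [NumberField k]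

lemma coe_mulValHom (v : HeightOneSpectrum (𝓞 k)) (x : kˣ) :
    ((mulValHom k v x : Multiplicative ℤ) : WithZero (Multiplicative ℤ)) = v.valuation k (x : k) := by
  simp [mulValHom, WithZero.unitsWithZeroEquiv, WithZero.coe_unzero]

lemma mulValHom_eq_valuationOfNeZero (v : HeightOneSpectrum (𝓞 k)) (x : kˣ) :
    mulValHom k v x = v.valuationOfNeZero x := by
  rw [← WithZero.coe_inj, coe_mulValHom, HeightOneSpectrum.valuationOfNeZero_eq]

lemma count_spanSingleton (v : HeightOneSpectrum (𝓞 k)) (x : kˣ) :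
    count k v (spanSingleton (𝓞 k)⁰ (x : k)) = - (mulValHom k v x).toAdd := by
  rw [mulValHom_eq_valuationOfNeZero]
  have hx0 : (x : k) ≠ 0 := x.ne_zero
  have hns : spanSingleton (𝓞 k)⁰ (x:k) ≠ 0 := by
    rw [ne_eq, spanSingleton_eq_zero_iff]; exact hx0
  set s := IsLocalization.sec (𝓞 k)⁰ (x : k) with hs
  have hsec : (x : k) * algebraMap (𝓞 k) k s.2 = algebraMap (𝓞 k) k s.1 :=
    IsLocalization.sec_spec (𝓞 k)⁰ (x : k)
  have hs2 : (algebraMap (𝓞 k) k) (s.2 : 𝓞 k) ≠ 0 :=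
    IsFractionRing.to_map_ne_zero_of_mem_nonZeroDivisors s.2.2
  have h1 : spanSingleton (𝓞 k)⁰ (x:k)
      = spanSingleton (𝓞 k)⁰ ((algebraMap (𝓞 k) k) (s.2 : 𝓞 k))⁻¹ * ↑(Ideal.span {s.1}) := by
    rw [coeIdeal_span_singleton, spanSingleton_mul_spanSingleton, ← hsec]
    congr 1
    field_simp
  rw [count_well_defined k v hns h1]
  show _ = -(HeightOneSpectrum.valuationOfNeZeroToFun v x).toAdd
  rw [HeightOneSpectrum.valuationOfNeZeroToFun]
  simp only [toAdd_ofAdd, ← hs]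
  ring

lemma dvd_toAdd_of_locallyPthPower {p : ℕ} (hp : 0 < p) {v : HeightOneSpectrum (𝓞 k)} {x : kˣ}
    (hx : x ∈ locallyPthPower k p v) : (p:ℤ) ∣ (mulValHom k v x).toAdd := by
  obtain ⟨y, hy⟩ := hx
  have hy' : ((y : (v.adicCompletion k)ˣ) : v.adicCompletion k) ^ p
      = (algebraMap k (v.adicCompletion k)) (x : k) := by
    have := congrArg Units.val hy
    simpa [powMonoidHom, localUnitsMap] using this
  have hy'' : ((y : (v.adicCompletion k)ˣ) : v.adicCompletion k) ^ p
      = ((x : k) : v.adicCompletion k) := by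
    rw [hy', HeightOneSpectrum.algebraMap_adicCompletion]
    rfl
  have h1 : (Valued.v ((y : (v.adicCompletion k)ˣ) : v.adicCompletion k)) ^ p
      = v.valuation k (x : k) := by
    rw [← v.valuedAdicCompletion_eq_valuation' (x : k), ← hy'', map_pow]
       
  rw [← coe_mulValHom] at h1
  have hyv : Valued.v ((y : (v.adicCompletion k)ˣ) : v.adicCompletion k) ≠ 0 := by
    intro h0
    rw [h0, zero_pow hp.ne'] at h1
    exact WithZero.coe_ne_zero h1.symm
  obtain ⟨n, hn⟩ := WithZero.ne_zero_iff_exists.mp hyv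
  rw [← hn, ← WithZero.coe_pow, WithZero.coe_inj] at h1
  refine ⟨n.toAdd, ?_⟩
  rw [← h1, toAdd_pow, nsmul_eq_mul]

lemma dvd_toAdd_of_ker {p : ℕ} [NeZero p] {v : HeightOneSpectrum (𝓞 k)} {x : kˣ}
    (hx : x ∈ (valModP k p v).ker) : (p:ℤ) ∣ (mulValHom k v x).toAdd := by
  rw [MonoidHom.mem_ker, valModP, MonoidHom.comp_apply] at hx
  have : (((mulValHom k v x).toAdd : ℤ) : ZMod p) = 0 := by
    have := congrArg Multiplicative.toAdd hx
    simpa using this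
  exact (ZMod.intCast_zmod_eq_zero_iff_dvd _ p).mp this

lemma exists_pow_eq {p : ℕ} (hp : 0 < p) {x : kˣ}
    (h : ∀ v : HeightOneSpectrum (𝓞 k), (p:ℤ) ∣ (mulValHom k v x).toAdd) :
    ∃ I : FractionalIdeal (𝓞 k)⁰ k, I ≠ 0 ∧ I ^ p = spanSingleton (𝓞 k)⁰ (x : k) := by
  have hns : spanSingleton (𝓞 k)⁰ (x:k) ≠ 0 := by
    rw [ne_eq, spanSingleton_eq_zero_iff]; exact x.ne_zero
  have hdvd : ∀ v, (p:ℤ) ∣ count k v (spanSingleton (𝓞 k)⁰ (x:k)) := by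
    intro v; rw [count_spanSingleton]; exact (h v).neg_right
  set c : HeightOneSpectrum (𝓞 k) → ℤ :=
    fun v => count k v (spanSingleton (𝓞 k)⁰ (x:k)) / p with hc
  have hcp : ∀ v, (c v) * p = count k v (spanSingleton (𝓞 k)⁰ (x:k)) := by
    intro v
    rw [hc, mul_comm]
    exact Int.mul_ediv_cancel' (hdvd v)
  have hfin := finite_factors (spanSingleton (𝓞 k)⁰ (x:k))
  have hsupp : (Function.mulSupport fun v : HeightOneSpectrum (𝓞 k) =>
      (v.asIdeal : FractionalIdeal (𝓞 k)⁰ k) ^ (c v)).Finite := by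
    refine Set.Finite.subset (Filter.eventually_cofinite.mp hfin) ?_
    intro v hv h0
    apply hv
    show (v.asIdeal : FractionalIdeal (𝓞 k)⁰ k) ^ (c v) = 1
    have : c v = 0 := by rw [hc]; simp [h0]
    rw [this, zpow_zero]
  have hpow : (∏ᶠ v, (v.asIdeal : FractionalIdeal (𝓞 k)⁰ k) ^ (c v)) ^ p
      = spanSingleton (𝓞 k)⁰ (x:k) := by
    rw [finprod_pow hsupp]
    have heq : ∀ v : HeightOneSpectrum (𝓞 k),
        ((v.asIdeal : FractionalIdeal (𝓞 k)⁰ k) ^ (c v)) ^ p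
        = (v.asIdeal : FractionalIdeal (𝓞 k)⁰ k) ^ (count k v (spanSingleton (𝓞 k)⁰ (x:k))) := by
      intro v
      rw [← zpow_natCast ((v.asIdeal : FractionalIdeal (𝓞 k)⁰ k) ^ (c v)) p, ← zpow_mul, hcp]
    rw [finprod_congr heq]
    exact FractionalIdeal.finprod_heightOneSpectrum_factorization' k hns
  refine ⟨∏ᶠ v, (v.asIdeal : FractionalIdeal (𝓞 k)⁰ k) ^ (c v), ?_, hpow⟩
  intro h0
  rw [h0, zero_pow hp.ne'] at hpow
  exact hns hpow.symm


lemma exists_unit_of_spanSingleton_eq_one {z : kˣ}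
    (h : spanSingleton (𝓞 k)⁰ (z : k) = 1) :
    ∃ u : (𝓞 k)ˣ, Units.map (algebraMap (𝓞 k) k).toMonoidHom u = z := by
  have h1 : (z : k) ∈ (1 : FractionalIdeal (𝓞 k)⁰ k) := h ▸ mem_spanSingleton_self _ _
  obtain ⟨a, ha⟩ := (mem_one_iff _).mp h1
  have hinv : spanSingleton (𝓞 k)⁰ ((z⁻¹ : kˣ) : k) = 1 := by
    have := congrArg (fun I => spanSingleton (𝓞 k)⁰ ((z⁻¹ : kˣ) : k) * I) h
    simpa [spanSingleton_mul_spanSingleton] using this.symm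
  have h2 : ((z⁻¹ : kˣ) : k) ∈ (1 : FractionalIdeal (𝓞 k)⁰ k) :=
    hinv ▸ mem_spanSingleton_self _ _
  obtain ⟨b, hb⟩ := (mem_one_iff _).mp h2
  have hinj := IsFractionRing.injective (𝓞 k) k
  have hab : a * b = 1 := by
    apply hinj
    rw [_root_.map_mul, _root_.map_one, ha, hb]
    simp
  have hba : b * a = 1 := by rw [mul_comm]; exact hab
  exact ⟨⟨a, b, hab, hba⟩, Units.ext (by simpa using ha)⟩

lemma exists_spanSingleton_of_mk_eq {I J : (FractionalIdeal (𝓞 k)⁰ k)ˣ}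
    (h : ClassGroup.mk k I = ClassGroup.mk k J) :
    ∃ t : kˣ, (I : FractionalIdeal (𝓞 k)⁰ k)
      = spanSingleton (𝓞 k)⁰ (t : k) * (J : FractionalIdeal (𝓞 k)⁰ k) := by
  have h1 : ClassGroup.mk k (I * J⁻¹) = 1 := by
    rw [_root_.map_mul, _root_.map_inv, h, mul_inv_cancel]
  obtain ⟨t, ht⟩ := (ClassGroup.mk_eq_one_iff.mp h1).principal
  have hIJ : ((I * J⁻¹ : (FractionalIdeal (𝓞 k)⁰ k)ˣ) : FractionalIdeal (𝓞 k)⁰ k)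
      = spanSingleton (𝓞 k)⁰ t := by
    apply coeToSubmodule_injective
    simp only [coe_spanSingleton]
    exact ht
  have ht0 : t ≠ 0 := by
    intro h0
    rw [h0, spanSingleton_zero] at hIJ
    exact Units.ne_zero _ hIJ
  refine ⟨Units.mk0 t ht0, ?_⟩
  have hJ0 : (J : FractionalIdeal (𝓞 k)⁰ k) ≠ 0 := Units.ne_zero J
  have : (I : FractionalIdeal (𝓞 k)⁰ k) * (J : FractionalIdeal (𝓞 k)⁰ k)⁻¹
      = spanSingleton (𝓞 k)⁰ t := by
    rw [← hIJ]
    simp [Units.val_inv_eq_inv_val]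
  field_simp at this
  simpa [Units.val_mk0, mul_comm] using this

lemma finite_unitsModP (p : ℕ) (hp : p.Prime) :
    Finite ((𝓞 k)ˣ ⧸ pPowers (𝓞 k)ˣ p) := by
  have hfg : Group.FG ((𝓞 k)ˣ) := Group.fg_iff_monoid_fg.mpr inferInstance
  apply CommGroup.finite_of_fg_torsion
  intro g
  refine isOfFinOrder_iff_pow_eq_one.mpr ⟨p, hp.pos, ?_⟩
  obtain ⟨u, rfl⟩ := QuotientGroup.mk_surjective g
  rw [← QuotientGroup.mk_pow]
  exact (QuotientGroup.eq_one_iff _).mpr ⟨u, rfl⟩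

lemma finite_of_fibers {α β : Type*} [Finite β] (f : α → β)
    (h : ∀ b, Finite {a : α // f a = b}) : Finite α := by
  have : Finite (Σ b : β, {a : α // f a = b}) := by
    haveI := h
    infer_instance
  exact Finite.of_equiv _ (Equiv.sigmaFiberEquiv f)

end Aux

open scoped nonZeroDivisors in
/-- for any finite set `S` of nonzero primes of `O_k`, the Kummer group
`V_S(k)` is finite. -/
theorem statement7 (k : Type) [Field k] [NumberField k] (p : ℕ) (hp : p.Prime)
    (S : Finset (HeightOneSpectrum (𝓞 k))) :
    Finite (VS k p ↑S) := by
  classical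
  haveI : NeZero p := ⟨hp.ne_zero⟩
  have key : ∀ x : (VS k p (↑S : Set (HeightOneSpectrum (𝓞 k)))),
      ∃ d : kˣ × FractionalIdeal (𝓞 k)⁰ k,
      (QuotientGroup.mk' (pPowers kˣ p)) d.1 = (x : kˣ ⧸ pPowers kˣ p) ∧ d.2 ≠ 0 ∧
      d.2 ^ p = FractionalIdeal.spanSingleton (𝓞 k)⁰ (d.1 : k) := by
    rintro ⟨x, hx⟩
    obtain ⟨a, haS, hax⟩ := Subgroup.mem_map.mp hx
    have hdvd : ∀ v : HeightOneSpectrum (𝓞 k), (p:ℤ) ∣ (mulValHom k v a).toAdd := by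
      intro v
      rw [VSpre, Subgroup.mem_inf] at haS
      by_cases hv : v ∈ (↑S : Set (HeightOneSpectrum (𝓞 k)))
      · refine dvd_toAdd_of_locallyPthPower hp.pos ?_
        have h1 := haS.1
        rw [Subgroup.mem_iInf] at h1
        have h2 := h1 v
        rw [Subgroup.mem_iInf] at h2
        exact h2 hv
      · have h1 := haS.2
        rw [Subgroup.mem_iInf] at h1
        have h2 := h1 v
        rw [Subgroup.mem_iInf] at h2
        exact dvd_toAdd_of_ker (h2 hv)
    obtain ⟨I, hI0, hIp⟩ := exists_pow_eq hp.pos hdvd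
    exact ⟨(a, I), hax, hI0, hIp⟩
  choose d hd1 hd2 hd3 using key
  set F : (VS k p (↑S : Set (HeightOneSpectrum (𝓞 k)))) → ClassGroup (𝓞 k) :=
    fun x => ClassGroup.mk k (Units.mk0 (d x).2 (hd2 x)) with hF
  haveI : Finite (ClassGroup (𝓞 k)) := inferInstance
  apply finite_of_fibers F
  intro c
  by_cases hne : Nonempty {x // F x = c}
  swap
  · rw [not_nonempty_iff] at hne
    infer_instance
  obtain ⟨x₀⟩ := hne
  haveI : Finite ((𝓞 k)ˣ ⧸ pPowers (𝓞 k)ˣ p) := finite_unitsModP p hp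
  set U : (𝓞 k)ˣ →* kˣ := Units.map (algebraMap (𝓞 k) k).toMonoidHom with hU
  have key2 : ∀ x : {x // F x = c}, ∃ u : (𝓞 k)ˣ, ∃ t : kˣ,
      (d x.1).1 = U u * t ^ p * (d x₀.1).1 := by
    intro x
    have hcc : ClassGroup.mk k (Units.mk0 (d x.1).2 (hd2 x.1))
        = ClassGroup.mk k (Units.mk0 (d x₀.1).2 (hd2 x₀.1)) := by
      exact x.2.trans x₀.2.symm
    obtain ⟨t, ht⟩ := exists_spanSingleton_of_mk_eq hcc
    simp only [Units.val_mk0] at ht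
    have hpow : FractionalIdeal.spanSingleton (𝓞 k)⁰ (((d x.1).1 : kˣ) : k)
        = FractionalIdeal.spanSingleton (𝓞 k)⁰ (((t ^ p * (d x₀.1).1 : kˣ) : kˣ) : k) := by
      rw [← hd3 x.1, ht, mul_pow, hd3 x₀.1, FractionalIdeal.spanSingleton_pow,
        FractionalIdeal.spanSingleton_mul_spanSingleton]
      push_cast
      rfl
    set z : kˣ := (d x.1).1 * ((t ^ p) * (d x₀.1).1)⁻¹ with hz
    have hX0 : FractionalIdeal.spanSingleton (𝓞 k)⁰ (((t ^ p * (d x₀.1).1 : kˣ) : kˣ) : k)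
        ≠ 0 := by
      rw [ne_eq, FractionalIdeal.spanSingleton_eq_zero_iff]
      exact Units.ne_zero _
    have hspan : FractionalIdeal.spanSingleton (𝓞 k)⁰ (z : k) = 1 := by
      apply mul_right_cancel₀ hX0
      rw [one_mul, FractionalIdeal.spanSingleton_mul_spanSingleton, ← hpow]
      congr 1
      rw [hz]
      push_cast [Units.val_inv_eq_inv_val]
      field_simp
    obtain ⟨u, hu⟩ := exists_unit_of_spanSingleton_eq_one hspan
    refine ⟨u, t, ?_⟩
    have : U u = z := hu
    rw [this, hz, mul_assoc]
    group
  choose u t hu using key2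
  set g : {x // F x = c} → ((𝓞 k)ˣ ⧸ pPowers (𝓞 k)ˣ p) :=
    fun x => QuotientGroup.mk (u x) with hg
  have hginj : Function.Injective g := by
    intro x y hxy
    rw [hg] at hxy
    have hmem : (u x)⁻¹ * u y ∈ pPowers (𝓞 k)ˣ p := QuotientGroup.eq.mp hxy
    obtain ⟨w, hw⟩ := hmem
    have hw' : w ^ p = (u x)⁻¹ * u y := hw
    have hq : (x.1 : kˣ ⧸ pPowers kˣ p) = (y.1 : kˣ ⧸ pPowers kˣ p) := by
      rw [← hd1 x.1, ← hd1 y.1]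
      have hmem2 : ((d x.1).1)⁻¹ * (d y.1).1 ∈ pPowers kˣ p := by
        refine ⟨U w * ((t x)⁻¹ * t y), ?_⟩
        show (U w * ((t x)⁻¹ * t y)) ^ p = _
        rw [hu x, hu y, mul_pow, mul_pow, ← map_pow, hw', _root_.map_mul, _root_.map_inv,
          Units.ext_iff]
        push_cast [Units.val_inv_eq_inv_val]
        field_simp
        ring_nf
        rw [← mul_pow, mul_inv_cancel₀ (Units.ne_zero _), one_pow]
      exact QuotientGroup.eq.mpr hmem2
    have : x.1 = y.1 := Subtype.ext hq
    exact Subtype.ext this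
  exact Finite.of_injective g hginj
end
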